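/- Let n be a positive integer and α > 0. With λ_{n,i} = (n/(αe))^{2n}/((i−1/2)²π²) and φ_{n,i}(τ) = (αe/n)^{n/2}·√2·sin((i−1/2)π·τⁿ e^{−ατ}·(αe/n)ⁿ), the series Σ_{i=1}^∞ λ_{n,i} φ_{n,i}(τ₁) φ_{n,i}(τ₂) converges absolutely for every (τ₁,τ₂) ∈ [0,∞)×[0,∞), the partial sums converge uniformly on [0,∞)×[0,∞), and the sum equals min(τ₁ⁿ e^{−ατ₁}, τ₂ⁿ e^{−ατ₂}). -/

import Mathlib

open MeasureTheory Real Filter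

/-- Eigenvalue `λ_{n,i} = (n/(αe))^{2n} · 1/((i-1/2)²π²)` of the multiple pole spline kernel. -/
noncomputable def lamMS (n : ℕ) (α : ℝ) (i : ℕ) : ℝ :=
  ((n : ℝ) / (α * Real.exp 1)) ^ (2 * n) * (1 / (((i : ℝ) - 1/2) ^ 2 * π ^ 2))

/-- Eigenfunction `φ_{n,i}(τ) = (αe/n)^{n/2} √2 sin((i-1/2)π τⁿ e^{-ατ} (αe/n)ⁿ)`. -/
noncomputable def phiMS (n : ℕ) (α : ℝ) (i : ℕ) (τ : ℝ) : ℝ :=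
  (α * Real.exp 1 / (n : ℝ)) ^ ((n : ℝ) / 2) *
    (Real.sqrt 2 *
      Real.sin (((i : ℝ) - 1/2) * π * (τ ^ n * Real.exp (-α * τ) * (α * Real.exp 1 / (n : ℝ)) ^ n)))

lemma bern2MS (x : ℝ) : (Polynomial.map (algebraMap ℚ ℝ) (Polynomial.bernoulli 2)).eval x = x^2 - x + 1/6 := by
  have h2 : _root_.bernoulli 2 = 1/6 := by
    rw [bernoulli]; norm_num [bernoulli'_two]
  simp [Polynomial.bernoulli_def, Finset.sum_range_succ, bernoulli_zero, bernoulli_one, h2]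
  ring

lemma SlemMS {x : ℝ} (hx : x ∈ Set.Icc (0:ℝ) 1) :
    HasSum (fun n : ℕ => 1/(n:ℝ)^2 * Real.cos (2*π*n*x)) (π^2 * (x^2 - x + 1/6)) := by
  have h := hasSum_one_div_nat_pow_mul_cos (k := 1) one_ne_zero hx
  rw [bern2MS] at h
  convert h using 1
  · have hfac : (((2*1 : ℕ).factorial : ℝ)) = 2 := by norm_num [Nat.factorial]
    rw [hfac]; ring

lemma oddlemMS {x : ℝ} (hx : x ∈ Set.Icc (0:ℝ) (1/2)) :
    HasSum (fun k : ℕ => 1/(2*(k:ℝ)+1)^2 * Real.cos (2*π*(2*(k:ℝ)+1)*x))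
      (π^2 * (1/8 - x/2)) := by
  obtain ⟨hx0, hx1⟩ := hx
  set f : ℕ → ℝ := fun n : ℕ => 1/(n:ℝ)^2 * Real.cos (2*π*n*x) with hf
  have hT : HasSum f (π^2 * (x^2 - x + 1/6)) := SlemMS ⟨hx0, by linarith⟩
  have hE : HasSum (fun k : ℕ => f (2*k)) ((π^2 * ((2*x)^2 - 2*x + 1/6))/4) := by
    have h2 := (SlemMS (x := 2*x) ⟨by linarith, by linarith⟩).div_const 4
    convert h2 using 2 with k
    · rfl
    simp only [hf]
    have harg : 2*π*((2*k : ℕ):ℝ)*x = 2*π*(k:ℝ)*(2*x) := by push_cast; ring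
    have hco : (1:ℝ)/((2*k : ℕ):ℝ)^2 = 1/(k:ℝ)^2/4 := by
      push_cast; rw [div_div]; congr 1; ring
    rw [harg, hco, div_mul_eq_mul_div]
  have hOs : Summable (fun k : ℕ => f (2*k+1)) :=
    hT.summable.comp_injective (fun a b h => by omega)
  have hO : HasSum (fun k : ℕ => f (2*k+1)) (∑' k, f (2*k+1)) := hOs.hasSum
  have huniq : π ^ 2 * (x ^ 2 - x + 1 / 6) = π ^ 2 * ((2 * x) ^ 2 - 2 * x + 1 / 6) / 4 + ∑' k, f (2*k+1) :=
    hT.unique (hE.even_add_odd hO)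
  have hval : (∑' k, f (2*k+1)) = π^2 * (1/8 - x/2) := by linarith
  rw [hval] at hO
  have hfun : (fun k : ℕ => 1/(2*(k:ℝ)+1)^2 * Real.cos (2*π*(2*(k:ℝ)+1)*x)) = fun k => f (2*k+1) := by
    funext k; simp only [hf]; push_cast; ring_nf
  rw [hfun]; exact hO

lemma coslemMS_nonneg {s : ℝ} (h0 : 0 ≤ s) (h2 : s ≤ 2) :
    HasSum (fun k : ℕ => Real.cos (((k:ℝ)+1/2)*π*s)/(((k:ℝ)+1/2)*π)^2) ((1-s)/2) := by
  have hπ := Real.pi_ne_zero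
  have h := (oddlemMS (x := s/4) ⟨by linarith, by linarith⟩).mul_left (4/π^2)
  convert h using 1
  · rfl
  · funext k
    have hk : (2*(k:ℝ)+1) ≠ 0 := by positivity
    have harg : 2*π*(2*(k:ℝ)+1)*(s/4) = ((k:ℝ)+1/2)*π*s := by ring
    rw [harg]
    field_simp
    ring
  · field_simp
    ring

lemma coslemMS {s : ℝ} (hs : s ∈ Set.Icc (-2:ℝ) 2) :
    HasSum (fun k : ℕ => Real.cos (((k:ℝ)+1/2)*π*s)/(((k:ℝ)+1/2)*π)^2) ((1-|s|)/2) := by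
  obtain ⟨hl, hr⟩ := hs
  rcases le_or_gt 0 s with h | h
  · rw [abs_of_nonneg h]; exact coslemMS_nonneg h hr
  · rw [abs_of_neg h]
    have := coslemMS_nonneg (s := -s) (by linarith) (by linarith)
    convert this using 2 with k
    rw [show ((k:ℝ)+1/2)*π*(-s) = -(((k:ℝ)+1/2)*π*s) by ring, Real.cos_neg]

lemma keylemMS {x y : ℝ} (hx : x ∈ Set.Icc (0:ℝ) 1) (hy : y ∈ Set.Icc (0:ℝ) 1) :
    HasSum (fun k : ℕ =>
        2 * Real.sin (((k:ℝ)+1/2)*π*x) * Real.sin (((k:ℝ)+1/2)*π*y) / (((k:ℝ)+1/2)*π)^2)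
      (min x y) := by
  obtain ⟨hx0, hx1⟩ := hx
  obtain ⟨hy0, hy1⟩ := hy
  have h1 := coslemMS (s := x - y) ⟨by linarith, by linarith⟩
  have h2 := coslemMS (s := x + y) ⟨by linarith, by linarith⟩
  have h := h1.sub h2
  convert h using 1
  · rfl
  · funext k
    rw [div_sub_div_same]
    congr 1
    have := Real.cos_sub_cos (((k:ℝ)+1/2)*π*(x-y)) (((k:ℝ)+1/2)*π*(x+y))
    rw [this, show (((k:ℝ)+1/2)*π*(x-y) + ((k:ℝ)+1/2)*π*(x+y))/2 = ((k:ℝ)+1/2)*π*x by ring,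
      show (((k:ℝ)+1/2)*π*(x-y) - ((k:ℝ)+1/2)*π*(x+y))/2 = -(((k:ℝ)+1/2)*π*y) by ring,
      Real.sin_neg]
    ring
  · rw [abs_of_nonneg (by linarith : 0 ≤ x + y)]
    rcases le_total x y with h' | h'
    · rw [min_eq_left h', abs_of_nonpos (by linarith)]; ring
    · rw [min_eq_right h', abs_of_nonneg (by linarith)]; ring

theorem stmt_18 (n : ℕ) (hn : 1 ≤ n) (α : ℝ) (hα : 0 < α) :
    (∀ τ₁ ∈ Set.Ici (0 : ℝ), ∀ τ₂ ∈ Set.Ici (0 : ℝ),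
      Summable fun k : ℕ => |lamMS n α (k + 1) * phiMS n α (k + 1) τ₁ * phiMS n α (k + 1) τ₂|) ∧
    TendstoUniformlyOn
      (fun (N : ℕ) (p : ℝ × ℝ) =>
        ∑ k ∈ Finset.range N, lamMS n α (k + 1) * phiMS n α (k + 1) p.1 * phiMS n α (k + 1) p.2)
      (fun p : ℝ × ℝ =>
        min (p.1 ^ n * Real.exp (-α * p.1)) (p.2 ^ n * Real.exp (-α * p.2)))
      atTop (Set.Ici (0 : ℝ) ×ˢ Set.Ici (0 : ℝ)) ∧
    (∀ τ₁ ∈ Set.Ici (0 : ℝ), ∀ τ₂ ∈ Set.Ici (0 : ℝ),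
      ∑' k : ℕ, lamMS n α (k + 1) * phiMS n α (k + 1) τ₁ * phiMS n α (k + 1) τ₂
        = min (τ₁ ^ n * Real.exp (-α * τ₁)) (τ₂ ^ n * Real.exp (-α * τ₂))) := by
  have hπ := Real.pi_pos
  have hn0 : (0:ℝ) < n := by exact_mod_cast hn
  have he : (0:ℝ) < Real.exp 1 := Real.exp_pos 1
  have hae : (0:ℝ) < α * Real.exp 1 / n := by positivity
  set M : ℝ := ((n:ℝ)/(α*Real.exp 1))^n with hM
  set B : ℝ := (α*Real.exp 1/(n:ℝ))^n with hB
  have hMpos : 0 < M := by positivity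
  have hBpos : 0 < B := by positivity
  have hMB : M * B = 1 := by
    rw [hM, hB, ← mul_pow]
    have : (n:ℝ)/(α*Real.exp 1) * (α*Real.exp 1/(n:ℝ)) = 1 := by field_simp
    rw [this, one_pow]
  -- the maximum bound
  have hub : ∀ τ : ℝ, 0 ≤ τ → τ ^ n * Real.exp (-α * τ) ≤ M := by
    intro τ hτ
    have hX : (0:ℝ) < Real.exp (α*τ/n) := Real.exp_pos _
    have h1 : α*τ/n ≤ Real.exp (α*τ/n) / Real.exp 1 := by
      have h := Real.add_one_le_exp (α*τ/n - 1)
      rw [Real.exp_sub] at h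
      linarith
    rw [div_le_div_iff₀ hn0 he] at h1
    have hA : τ * Real.exp (-(α*τ/n)) ≤ (n:ℝ)/(α * Real.exp 1) := by
      rw [Real.exp_neg, ← div_eq_mul_inv, div_le_div_iff₀ hX (by positivity)]
      calc τ * (α * Real.exp 1) = α * τ * Real.exp 1 := by ring
        _ ≤ Real.exp (α*τ/n) * n := h1
        _ = (n:ℝ) * Real.exp (α*τ/n) := by ring
    have hC : (τ * Real.exp (-(α*τ/n)))^n = τ^n * Real.exp (-α * τ) := by
      rw [mul_pow, ← Real.exp_nat_mul]
      congr 1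
      field_simp
    calc τ^n * Real.exp (-α * τ) = (τ * Real.exp (-(α*τ/n)))^n := hC.symm
      _ ≤ ((n:ℝ)/(α * Real.exp 1))^n := pow_le_pow_left₀ (by positivity) hA n
  -- membership of u in [0,1]
  have hmem : ∀ τ : ℝ, 0 ≤ τ → τ ^ n * Real.exp (-α * τ) * B ∈ Set.Icc (0:ℝ) 1 := by
    intro τ hτ
    constructor
    · have h1 := pow_nonneg hτ n
      have h2 := (Real.exp_pos (-α * τ)).le
      positivity
    · calc τ ^ n * Real.exp (-α * τ) * B ≤ M * B :=
            mul_le_mul_of_nonneg_right (hub τ hτ) hBpos.le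
        _ = 1 := hMB
  -- the term identity
  have hterm : ∀ (k : ℕ) (τ₁ τ₂ : ℝ),
      lamMS n α (k+1) * phiMS n α (k+1) τ₁ * phiMS n α (k+1) τ₂
      = M * (2 * Real.sin (((k:ℝ)+1/2)*π*(τ₁ ^ n * Real.exp (-α * τ₁) * B))
           * Real.sin (((k:ℝ)+1/2)*π*(τ₂ ^ n * Real.exp (-α * τ₂) * B))
           / (((k:ℝ)+1/2)*π)^2) := by
    intro k τ₁ τ₂
    have hcast : (((k+1:ℕ):ℝ) - 1/2) = (k:ℝ)+1/2 := by push_cast; ring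
    have hRR : (α*Real.exp 1/(n:ℝ)) ^ ((n:ℝ)/2) * (α*Real.exp 1/(n:ℝ)) ^ ((n:ℝ)/2) = B := by
      rw [hB, ← Real.rpow_add hae, ← Real.rpow_natCast (α*Real.exp 1/(n:ℝ)) n]
      norm_num
    have hs2 : Real.sqrt 2 * Real.sqrt 2 = 2 := Real.mul_self_sqrt (by norm_num)
    have hM2 : ((n:ℝ)/(α*Real.exp 1))^(2*n) = M * M := by
      rw [hM, two_mul, pow_add]
    simp only [lamMS, phiMS, hcast, hM2, ← hB]
    set R := (α*Real.exp 1/(n:ℝ)) ^ ((n:ℝ)/2) with hR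
    set Q := Real.sqrt 2 with hQ
    set s₁ := Real.sin (((k:ℝ)+1/2)*π*(τ₁ ^ n * Real.exp (-α * τ₁) * B)) with hs1
    set s₂ := Real.sin (((k:ℝ)+1/2)*π*(τ₂ ^ n * Real.exp (-α * τ₂) * B)) with hs2'
    linear_combination (M*M*Q*Q*s₁*s₂/(((k:ℝ)+1/2)*π)^2) * hRR
      + (M*M*B*s₁*s₂/(((k:ℝ)+1/2)*π)^2) * hs2
      + (2*M*s₁*s₂/(((k:ℝ)+1/2)*π)^2) * hMB
  -- HasSum of the series
  have hHS : ∀ τ₁ ∈ Set.Ici (0:ℝ), ∀ τ₂ ∈ Set.Ici (0:ℝ),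
      HasSum (fun k : ℕ => lamMS n α (k+1) * phiMS n α (k+1) τ₁ * phiMS n α (k+1) τ₂)
        (min (τ₁ ^ n * Real.exp (-α * τ₁)) (τ₂ ^ n * Real.exp (-α * τ₂))) := by
    intro τ₁ hτ₁ τ₂ hτ₂
    have h := (keylemMS (hmem τ₁ hτ₁) (hmem τ₂ hτ₂)).mul_left M
    have hfun : (fun k : ℕ => lamMS n α (k+1) * phiMS n α (k+1) τ₁ * phiMS n α (k+1) τ₂)
        = fun k : ℕ => M * (2 * Real.sin (((k:ℝ)+1/2)*π*(τ₁ ^ n * Real.exp (-α * τ₁) * B))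
           * Real.sin (((k:ℝ)+1/2)*π*(τ₂ ^ n * Real.exp (-α * τ₂) * B))
           / (((k:ℝ)+1/2)*π)^2) := by
      funext k; exact hterm k τ₁ τ₂
    rw [hfun]
    convert h using 1
    rfl
    have hscale : ∀ τ : ℝ, M * (τ ^ n * Real.exp (-α * τ) * B) = τ ^ n * Real.exp (-α * τ) := by
      intro τ
      calc M * (τ ^ n * Real.exp (-α * τ) * B) = τ ^ n * Real.exp (-α * τ) * (M * B) := by ring
        _ = τ ^ n * Real.exp (-α * τ) := by rw [hMB, mul_one]
    rcases le_total (τ₁ ^ n * Real.exp (-α * τ₁) * B) (τ₂ ^ n * Real.exp (-α * τ₂) * B) with h' | h'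
    · rw [min_eq_left h', hscale,
        min_eq_left (by
          have := mul_le_mul_of_nonneg_left h' hMpos.le
          rwa [hscale, hscale] at this)]
    · rw [min_eq_right h', hscale,
        min_eq_right (by
          have := mul_le_mul_of_nonneg_left h' hMpos.le
          rwa [hscale, hscale] at this)]
  -- the summable majorant
  have hg : Summable (fun k : ℕ => M * 2 * (1/(((k:ℝ)+1/2)*π)^2)) := by
    have h0 := (coslemMS (s := 0) ⟨by norm_num, by norm_num⟩).summable
    simp only [mul_zero, Real.cos_zero] at h0
    simpa using h0.mul_left (M * 2)
  -- the uniform bound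
  have hbd : ∀ (k : ℕ) (τ₁ τ₂ : ℝ),
      |lamMS n α (k+1) * phiMS n α (k+1) τ₁ * phiMS n α (k+1) τ₂|
        ≤ M * 2 * (1/(((k:ℝ)+1/2)*π)^2) := by
    intro k τ₁ τ₂
    rw [hterm k τ₁ τ₂]
    have hc2 : (0:ℝ) < (((k:ℝ)+1/2)*π)^2 := by positivity
    set s₁ := Real.sin (((k:ℝ)+1/2)*π*(τ₁ ^ n * Real.exp (-α * τ₁) * B))
    set s₂ := Real.sin (((k:ℝ)+1/2)*π*(τ₂ ^ n * Real.exp (-α * τ₂) * B))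
    have hs₁ : |s₁| ≤ 1 := abs_le.mpr ⟨Real.neg_one_le_sin _, Real.sin_le_one _⟩
    have hs₂ : |s₂| ≤ 1 := abs_le.mpr ⟨Real.neg_one_le_sin _, Real.sin_le_one _⟩
    have h1 : |2 * s₁ * s₂| ≤ 2 := by
      rw [abs_mul, abs_mul, abs_two]
      nlinarith [abs_nonneg s₁, abs_nonneg s₂]
    rw [abs_mul, abs_of_pos hMpos, abs_div, abs_of_pos hc2]
    calc M * (|2 * s₁ * s₂| / (((k:ℝ)+1/2)*π)^2)
        ≤ M * (2 / (((k:ℝ)+1/2)*π)^2) := by gcongr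
      _ = M * 2 * (1/(((k:ℝ)+1/2)*π)^2) := by ring
  refine ⟨?_, ?_, ?_⟩
  · intro τ₁ _ τ₂ _
    exact Summable.of_nonneg_of_le (fun k => abs_nonneg _) (fun k => hbd k τ₁ τ₂) hg
  · have hUnif := tendstoUniformlyOn_tsum_nat (f := fun (k : ℕ) (p : ℝ × ℝ) =>
        lamMS n α (k+1) * phiMS n α (k+1) p.1 * phiMS n α (k+1) p.2)
      hg (s := Set.Ici (0:ℝ) ×ˢ Set.Ici (0:ℝ))
      (fun k p _ => by rw [Real.norm_eq_abs]; exact hbd k p.1 p.2)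
    exact hUnif.congr_right (fun p hp => (hHS p.1 hp.1 p.2 hp.2).tsum_eq)
  · intro τ₁ hτ₁ τ₂ hτ₂
    exact (hHS τ₁ hτ₁ τ₂ hτ₂).tsum_eq
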